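/- arXiv:2203.14368 — 4 statements merged into one kernel-verified Lean document; each statement's English description precedes it below -/
import Mathlib

section
/- Let F = f + ψ where f has block coordinate-wise Lipschitz gradient with constants Lᵢ, ψ : ℝⁿ → ℝ is differentiable and the map d ↦ ψ(x + Uᵢd) is convex for every x and i. Fix an index i, a constant H > Lᵢ/2, a point x, and let d minimize d ↦ f(x) + ⟨Uᵢᵀ∇f(x), d⟩ + (H/2)‖d‖² + ψ(x + Uᵢd) over ℝ^{nᵢ}. Then F(x + Uᵢd) ≤ F(x) − (H − Lᵢ/2)‖d‖². -/
open scoped RealInnerProductSpace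

/-- Descent lemma: block-coordinate Lipschitz gradient gives the quadratic upper bound. -/
lemma stmt2_descent {n ni : ℕ} (f : EuclideanSpace ℝ (Fin n) → ℝ)
    (hf : ContDiff ℝ 1 f)
    (U : EuclideanSpace ℝ (Fin ni) →L[ℝ] EuclideanSpace ℝ (Fin n))
    (L : ℝ)
    (hLip : ∀ (x : EuclideanSpace ℝ (Fin n)) (h : EuclideanSpace ℝ (Fin ni)),
      ‖ContinuousLinearMap.adjoint U (gradient f (x + U h) - gradient f x)‖ ≤ L * ‖h‖)
    (x : EuclideanSpace ℝ (Fin n)) (d : EuclideanSpace ℝ (Fin ni)) :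
    f (x + U d) ≤ f x + ⟪ContinuousLinearMap.adjoint U (gradient f x), d⟫
      + L / 2 * ‖d‖ ^ 2 := by
  set φ : ℝ → ℝ := fun t => f (x + t • U d) with hφ
  set φ' : ℝ → ℝ := fun t => ⟪gradient f (x + t • U d), U d⟫ with hφ'
  have hfd : Differentiable ℝ f := hf.differentiable one_ne_zero
  have hgrad_cont : Continuous (gradient f) := by
    have h1 : Continuous (fderiv ℝ f) := hf.continuous_fderiv one_ne_zero
    have : gradient f = fun y => (InnerProductSpace.toDual ℝ _).symm (fderiv ℝ f y) := rfl
    rw [this]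
    exact (InnerProductSpace.toDual ℝ _).symm.continuous.comp h1
  have hline : Continuous (fun t : ℝ => x + t • U d) :=
    continuous_const.add (continuous_id.smul continuous_const)
  have hderiv : ∀ t ∈ Set.uIcc (0:ℝ) 1, HasDerivAt φ (φ' t) t := by
    intro t _
    have h1 : HasFDerivAt f (fderiv ℝ f (x + t • U d)) (x + t • U d) :=
      (hfd _).hasFDerivAt
    have h2 : HasDerivAt (fun t : ℝ => x + t • U d) (U d) t := by
      have := ((hasDerivAt_id t).smul_const (U d)).const_add x
      simpa using this
    have h3 := h1.comp_hasDerivAt t h2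
    have h4 : fderiv ℝ f (x + t • U d) (U d) = φ' t := by
      simp only [hφ']
      rw [show gradient f (x + t • U d)
        = (InnerProductSpace.toDual ℝ _).symm (fderiv ℝ f (x + t • U d)) from rfl]
      rw [InnerProductSpace.toDual_symm_apply]
    rw [← h4]
    exact h3
  have hφ'cont : Continuous φ' :=
    continuous_inner.comp ((hgrad_cont.comp hline).prodMk continuous_const)
  have hint : IntervalIntegrable φ' MeasureTheory.volume 0 1 :=
    hφ'cont.intervalIntegrable 0 1
  have heq : ∫ t in (0:ℝ)..1, φ' t = φ 1 - φ 0 :=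
    intervalIntegral.integral_eq_sub_of_hasDerivAt hderiv hint
  have hφ1 : φ 1 = f (x + U d) := by simp [hφ]
  have hφ0 : φ 0 = f x := by simp [hφ]
  have hbound : ∀ t ∈ Set.Icc (0:ℝ) 1,
      φ' t ≤ ⟪ContinuousLinearMap.adjoint U (gradient f x), d⟫ + L * ‖d‖ ^ 2 * t := by
    intro t ht
    have ht0 : 0 ≤ t := ht.1
    have key : φ' t = ⟪ContinuousLinearMap.adjoint U (gradient f x), d⟫
        + ⟪ContinuousLinearMap.adjoint U
          (gradient f (x + t • U d) - gradient f x), d⟫ := by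
      simp only [hφ', map_sub, ContinuousLinearMap.adjoint_inner_left, inner_sub_left]
      ring
    rw [key]
    have h5 : ⟪ContinuousLinearMap.adjoint U
        (gradient f (x + t • U d) - gradient f x), d⟫ ≤ L * ‖d‖ ^ 2 * t := by
      calc ⟪ContinuousLinearMap.adjoint U
            (gradient f (x + t • U d) - gradient f x), d⟫
          ≤ ‖ContinuousLinearMap.adjoint U
            (gradient f (x + t • U d) - gradient f x)‖ * ‖d‖ :=
            real_inner_le_norm _ _
        _ ≤ (L * ‖t • d‖) * ‖d‖ := by
            have := hLip x (t • d)
            rw [show x + U (t • d) = x + t • U d by rw [map_smul]] at this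
            exact mul_le_mul_of_nonneg_right this (norm_nonneg d)
        _ = L * ‖d‖ ^ 2 * t := by
            rw [norm_smul, Real.norm_eq_abs, abs_of_nonneg ht0]; ring
    linarith
  have hrhscont : Continuous (fun t : ℝ =>
      ⟪ContinuousLinearMap.adjoint U (gradient f x), d⟫ + L * ‖d‖ ^ 2 * t) :=
    continuous_const.add (continuous_const.mul continuous_id)
  have hintRHS : ∫ t in (0:ℝ)..1,
      (⟪ContinuousLinearMap.adjoint U (gradient f x), d⟫ + L * ‖d‖ ^ 2 * t)
      = ⟪ContinuousLinearMap.adjoint U (gradient f x), d⟫ + L / 2 * ‖d‖ ^ 2 := by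
    have hg : IntervalIntegrable (fun t : ℝ => L * ‖d‖ ^ 2 * t)
        MeasureTheory.volume 0 1 := by
      apply Continuous.intervalIntegrable
      exact continuous_const.mul continuous_id
    rw [intervalIntegral.integral_add intervalIntegrable_const hg,
      intervalIntegral.integral_const_mul, integral_id]
    simp
    ring
  have hmono : ∫ t in (0:ℝ)..1, φ' t ≤ ∫ t in (0:ℝ)..1,
      (⟪ContinuousLinearMap.adjoint U (gradient f x), d⟫ + L * ‖d‖ ^ 2 * t) :=
    intervalIntegral.integral_mono_on (by norm_num) hint
      (hrhscont.intervalIntegrable 0 1) hbound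
  rw [heq, hφ1, hφ0, hintRHS] at hmono
  linarith

/-- Descent of the coordinate proximal gradient step when `ψ` is convex along
coordinates: if `d` minimizes the proximal subproblem with parameter `H > L/2`,
then `F(x + U d) ≤ F(x) - (H - L/2)‖d‖²` where `F = f + ψ`. -/
theorem stmt2 {n ni : ℕ} (f ψ : EuclideanSpace ℝ (Fin n) → ℝ)
    (hf : ContDiff ℝ 1 f) (hψ : Differentiable ℝ ψ)
    (U : EuclideanSpace ℝ (Fin ni) →L[ℝ] EuclideanSpace ℝ (Fin n))
    (L H : ℝ) (hL : 0 < L)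
    (hLip : ∀ (x : EuclideanSpace ℝ (Fin n)) (h : EuclideanSpace ℝ (Fin ni)),
      ‖ContinuousLinearMap.adjoint U (gradient f (x + U h) - gradient f x)‖ ≤ L * ‖h‖)
    (hconv : ∀ x : EuclideanSpace ℝ (Fin n),
      ConvexOn ℝ Set.univ (fun d : EuclideanSpace ℝ (Fin ni) => ψ (x + U d)))
    (hH : L / 2 < H)
    (x : EuclideanSpace ℝ (Fin n)) (d : EuclideanSpace ℝ (Fin ni))
    (hmin : ∀ d' : EuclideanSpace ℝ (Fin ni),
      f x + ⟪ContinuousLinearMap.adjoint U (gradient f x), d⟫ + H / 2 * ‖d‖ ^ 2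
          + ψ (x + U d)
        ≤ f x + ⟪ContinuousLinearMap.adjoint U (gradient f x), d'⟫ + H / 2 * ‖d'‖ ^ 2
          + ψ (x + U d')) :
    f (x + U d) + ψ (x + U d) ≤ (f x + ψ x) - (H - L / 2) * ‖d‖ ^ 2 := by
  have hdesc := stmt2_descent f hf U L hLip x d
  have hH0 : 0 < H := by linarith
  -- strong convexity step: ⟪Uᵀ∇f x, d⟫ + H‖d‖² + ψ(x+Ud) ≤ ψ x
  have hstep : ∀ t : ℝ, 0 < t → t ≤ 1 →
      ⟪ContinuousLinearMap.adjoint U (gradient f x), d⟫ + H * ‖d‖ ^ 2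
        + ψ (x + U d) - ψ x ≤ H / 2 * ‖d‖ ^ 2 * t := by
    intro t ht0 ht1
    have hP := hmin ((1 - t) • d)
    have e1 : ⟪ContinuousLinearMap.adjoint U (gradient f x), (1 - t) • d⟫
        = (1 - t) * ⟪ContinuousLinearMap.adjoint U (gradient f x), d⟫ :=
      real_inner_smul_right _ _ _
    have e2 : ‖(1 - t) • d‖ ^ 2 = (1 - t) ^ 2 * ‖d‖ ^ 2 := by
      rw [norm_smul, mul_pow, Real.norm_eq_abs, sq_abs]
    have e3 : ψ (x + U ((1 - t) • d)) ≤ (1 - t) * ψ (x + U d) + t * ψ x := by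
      have hc := (hconv x).2 (Set.mem_univ d) (Set.mem_univ (0 : EuclideanSpace ℝ (Fin ni)))
        (by linarith : (0:ℝ) ≤ 1 - t) ht0.le (by ring)
      simp only [smul_eq_mul, smul_zero, add_zero, map_zero] at hc
      simpa using hc
    rw [e1, e2] at hP
    have hP2 : f x + ⟪ContinuousLinearMap.adjoint U (gradient f x), d⟫
        + H / 2 * ‖d‖ ^ 2 + ψ (x + U d)
        ≤ f x + (1 - t) * ⟪ContinuousLinearMap.adjoint U (gradient f x), d⟫
          + H / 2 * ((1 - t) ^ 2 * ‖d‖ ^ 2) + ((1 - t) * ψ (x + U d) + t * ψ x) := by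
      linarith
    have hmul : t * (⟪ContinuousLinearMap.adjoint U (gradient f x), d⟫ + H * ‖d‖ ^ 2
        + ψ (x + U d) - ψ x) ≤ t * (H / 2 * ‖d‖ ^ 2 * t) := by nlinarith [hP2]
    exact le_of_mul_le_mul_left hmul ht0
  have hstrong : ⟪ContinuousLinearMap.adjoint U (gradient f x), d⟫ + H * ‖d‖ ^ 2
      + ψ (x + U d) - ψ x ≤ 0 := by
    by_contra hcon
    push_neg at hcon
    set a := ⟪ContinuousLinearMap.adjoint U (gradient f x), d⟫ + H * ‖d‖ ^ 2
      + ψ (x + U d) - ψ x with ha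
    set C := H / 2 * ‖d‖ ^ 2 with hC
    have hCnn : 0 ≤ C := by positivity
    rcases eq_or_lt_of_le hCnn with hC0 | hCpos
    · have := hstep 1 one_pos le_rfl
      rw [← hC0] at this
      simp at this
      linarith
    · have ht0 : 0 < min 1 (a / (2 * C)) :=
        lt_min one_pos (div_pos hcon (by linarith))
      have := hstep (min 1 (a / (2 * C))) ht0 (min_le_left _ _)
      have h2 : C * min 1 (a / (2 * C)) ≤ C * (a / (2 * C)) :=
        mul_le_mul_of_nonneg_left (min_le_right _ _) hCnn
      have h3 : C * (a / (2 * C)) = a / 2 := by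
        field_simp
      linarith
  linarith
end

section
/- Let F = f + ψ where f has block coordinate-wise Lipschitz gradient with constants Lᵢ and ψ : ℝⁿ → ℝ is any continuous function. Fix an index i, a constant H > Lᵢ, a point x, and let d be a global minimizer of d ↦ f(x) + ⟨Uᵢᵀ∇f(x), d⟩ + (H/2)‖d‖² + ψ(x + Uᵢd) over ℝ^{nᵢ}. Then F(x + Uᵢd) ≤ F(x) − ((H − Lᵢ)/2)‖d‖². -/
open scoped RealInnerProductSpace

/-- Descent of the coordinate proximal gradient step for general continuous `ψ`:
if `d` globally minimizes the proximal subproblem with parameter `H > L`, then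
`F(x + U d) ≤ F(x) - ((H - L)/2)‖d‖²` where `F = f + ψ`. -/
theorem stmt3 {n ni : ℕ} (f ψ : EuclideanSpace ℝ (Fin n) → ℝ)
    (hf : ContDiff ℝ 1 f) (hψ : Continuous ψ)
    (U : EuclideanSpace ℝ (Fin ni) →L[ℝ] EuclideanSpace ℝ (Fin n))
    (L H : ℝ) (hL : 0 < L)
    (hLip : ∀ (x : EuclideanSpace ℝ (Fin n)) (h : EuclideanSpace ℝ (Fin ni)),
      ‖ContinuousLinearMap.adjoint U (gradient f (x + U h) - gradient f x)‖ ≤ L * ‖h‖)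
    (hH : L < H)
    (x : EuclideanSpace ℝ (Fin n)) (d : EuclideanSpace ℝ (Fin ni))
    (hmin : ∀ d' : EuclideanSpace ℝ (Fin ni),
      f x + ⟪ContinuousLinearMap.adjoint U (gradient f x), d⟫ + H / 2 * ‖d‖ ^ 2
          + ψ (x + U d)
        ≤ f x + ⟪ContinuousLinearMap.adjoint U (gradient f x), d'⟫ + H / 2 * ‖d'‖ ^ 2
          + ψ (x + U d')) :
    f (x + U d) + ψ (x + U d) ≤ (f x + ψ x) - (H - L) / 2 * ‖d‖ ^ 2 := by
  have hdiff : Differentiable ℝ f := hf.differentiable one_ne_zero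
  set gr := gradient f x with hgr
  -- the auxiliary function
  set g : ℝ → ℝ := fun t => f (x + t • U d) - t * ⟪gr, U d⟫ - L * t ^ 2 / 2 * ‖d‖ ^ 2
    with hg
  have hline : ∀ t : ℝ, HasDerivAt (fun s : ℝ => x + s • U d) (U d) t := by
    intro t
    simpa using ((hasDerivAt_id t).smul_const (U d)).const_add x
  have hgderiv : ∀ t : ℝ,
      HasDerivAt g (⟪gradient f (x + t • U d), U d⟫ - ⟪gr, U d⟫ - L * t * ‖d‖ ^ 2) t := by
    intro t
    have h1 : HasDerivAt (fun s : ℝ => f (x + s • U d)) ⟪gradient f (x + t • U d), U d⟫ t := by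
      have hfd := (hdiff (x + t • U d)).hasGradientAt
      have := (hfd.hasFDerivAt.comp_hasDerivAt t (hline t))
      exact this
    have h2 : HasDerivAt (fun s : ℝ => s * ⟪gr, U d⟫) ⟪gr, U d⟫ t := by
      simpa using (hasDerivAt_id t).mul_const ⟪gr, U d⟫
    have h3 : HasDerivAt (fun s : ℝ => L * s ^ 2 / 2 * ‖d‖ ^ 2) (L * t * ‖d‖ ^ 2) t := by
      have := (((hasDerivAt_pow 2 t).const_mul L).div_const 2).mul_const (‖d‖ ^ 2)
      exact this.congr_deriv (by push_cast; ring)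
    exact (h1.sub h2).sub h3
  have hkey : ∀ t ∈ Set.Icc (0:ℝ) 1,
      ⟪gradient f (x + t • U d), U d⟫ - ⟪gr, U d⟫ - L * t * ‖d‖ ^ 2 ≤ 0 := by
    intro t ht
    have h1 : ⟪gradient f (x + t • U d), U d⟫ - ⟪gr, U d⟫
        = ⟪ContinuousLinearMap.adjoint U (gradient f (x + U (t • d)) - gr), d⟫ := by
      rw [ContinuousLinearMap.adjoint_inner_left, map_smul]
      simp [inner_sub_left]
    have h2 := hLip x (t • d)
    calc ⟪gradient f (x + t • U d), U d⟫ - ⟪gr, U d⟫ - L * t * ‖d‖ ^ 2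
        ≤ ‖ContinuousLinearMap.adjoint U (gradient f (x + U (t • d)) - gr)‖ * ‖d‖
            - L * t * ‖d‖ ^ 2 := by
          rw [h1]; gcongr; exact real_inner_le_norm _ _
      _ ≤ L * ‖t • d‖ * ‖d‖ - L * t * ‖d‖ ^ 2 := by gcongr
      _ = 0 := by
          rw [norm_smul, Real.norm_eq_abs, abs_of_nonneg ht.1]; ring
  have hgdiff : Differentiable ℝ g := fun t => (hgderiv t).differentiableAt
  have hmono : g 1 ≤ g 0 := by
    have hanti : AntitoneOn g (Set.Icc (0:ℝ) 1) := by
      apply antitoneOn_of_deriv_nonpos (convex_Icc (0:ℝ) 1) hgdiff.continuous.continuousOn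
        (hgdiff.differentiableOn)
      intro t ht
      rw [interior_Icc] at ht
      rw [(hgderiv t).deriv]
      exact hkey t ⟨le_of_lt ht.1, le_of_lt ht.2⟩
    exact hanti (Set.left_mem_Icc.2 zero_le_one) (Set.right_mem_Icc.2 zero_le_one) zero_le_one
  have hdescent : f (x + U d) ≤ f x + ⟪gr, U d⟫ + L / 2 * ‖d‖ ^ 2 := by
    have h1 : g 1 = f (x + U d) - ⟪gr, U d⟫ - L / 2 * ‖d‖ ^ 2 := by
      simp [hg]
    have h0 : g 0 = f x := by simp [hg]
    rw [h1, h0] at hmono; linarith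
  have hinner : ⟪gr, U d⟫ = ⟪ContinuousLinearMap.adjoint U gr, d⟫ :=
    (ContinuousLinearMap.adjoint_inner_left U d gr).symm
  have hopt := hmin 0
  simp only [inner_zero_right, norm_zero] at hopt
  have hU0 : x + U (0 : EuclideanSpace ℝ (Fin ni)) = x := by simp
  rw [hU0] at hopt
  rw [hinner] at hdescent
  nlinarith [sq_nonneg (‖d‖), hopt, hdescent]
end

section
/- Let ψ : ℝⁿ → ℝ be differentiable and uniformly convex of degree q ∈ (1,2) with modulus σ_q > 0, i.e. ψ(x) ≥ ψ(y) + ⟨∇ψ(y), x−y⟩ + (σ_q(q−1)/q)‖x−y‖^{q/(q−1)} for all x,y. Let f : ℝⁿ → ℝ satisfy f(x) − f(y) − ⟨∇f(y), x−y⟩ ≥ −(L/2)‖x−y‖² for all x,y, with L > 0. Let F = f + ψ, let x* be a minimizer of F (so ∇f(x*) + ∇ψ(x*) = 0), and let x₀ be any point. Then for every x with F(x) ≤ F(x₀): ‖x − x*‖ ≤ max{ ((2(F(x₀) − F(x*)) + L)·q / (2(q−1)σ_q))^{(q−1)/(2−q)}, 1 }. -/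
open scoped RealInnerProductSpace

/-- Bound on the level set of `F = f + ψ` when `ψ` is uniformly convex of degree
`q ∈ (1,2)` and `f` satisfies a lower quadratic bound. -/
theorem stmt8 {n : ℕ} (f ψ : EuclideanSpace ℝ (Fin n) → ℝ)
    (hf : Differentiable ℝ f) (hψ : Differentiable ℝ ψ)
    (q σq L : ℝ) (hq : q ∈ Set.Ioo (1:ℝ) 2) (hσ : 0 < σq) (hL : 0 < L)
    (huc : ∀ x y : EuclideanSpace ℝ (Fin n),
      ψ x ≥ ψ y + ⟪gradient ψ y, x - y⟫ + σq * (q - 1) / q * ‖x - y‖ ^ (q / (q - 1)))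
    (hlow : ∀ x y : EuclideanSpace ℝ (Fin n),
      f x - f y - ⟪gradient f y, x - y⟫ ≥ -(L / 2) * ‖x - y‖ ^ 2)
    (xstar x₀ : EuclideanSpace ℝ (Fin n))
    (hmin : ∀ y, f xstar + ψ xstar ≤ f y + ψ y)
    (hcrit : gradient f xstar + gradient ψ xstar = 0) :
    ∀ x : EuclideanSpace ℝ (Fin n), f x + ψ x ≤ f x₀ + ψ x₀ →
      ‖x - xstar‖ ≤ max
        (((2 * ((f x₀ + ψ x₀) - (f xstar + ψ xstar)) + L) * q / (2 * (q - 1) * σq))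
          ^ ((q - 1) / (2 - q))) 1 := by
  obtain ⟨hq1, hq2⟩ := hq
  intro x hx
  set r := ‖x - xstar‖ with hrdef
  have hr0 : 0 ≤ r := norm_nonneg _
  set D := (f x₀ + ψ x₀) - (f xstar + ψ xstar) with hDdef
  have hD : 0 ≤ D := by have := hmin x₀; simp only [hDdef]; linarith
  have hq1' : 0 < q - 1 := by linarith
  have hq2' : 0 < 2 - q := by linarith
  have hqpos : 0 < q := by linarith
  have hinner : ⟪gradient f xstar, x - xstar⟫ + ⟪gradient ψ xstar, x - xstar⟫ = 0 := by
    rw [← inner_add_left, hcrit, inner_zero_left]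
  set p := q / (q - 1) with hpdef
  have key : σq * (q - 1) / q * r ^ p ≤ D + L / 2 * r ^ 2 := by
    have h1 := huc x xstar
    have h2 := hlow x xstar
    have h3 : f x + ψ x ≤ f x₀ + ψ x₀ := hx
    simp only [← hrdef, ← hpdef] at h1 h2
    simp only [hDdef]
    linarith
  rcases le_or_gt r 1 with h | h
  · exact le_max_of_le_right h
  · refine le_max_of_le_left ?_
    have hrpos : 0 < r := lt_trans one_pos h
    have hc : 0 < σq * (q - 1) / q := by positivity
    have hr2 : (0:ℝ) < r ^ 2 := by positivity
    have hsplit : r ^ p = r ^ (p - 2) * r ^ 2 := by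
      rw [← Real.rpow_natCast r 2, ← Real.rpow_add hrpos]
      norm_num
    have key2 : σq * (q - 1) / q * r ^ (p - 2) ≤ D + L / 2 := by
      have hr21 : 1 ≤ r ^ 2 := by nlinarith
      have hDr : D ≤ D * r ^ 2 := by nlinarith [mul_le_mul_of_nonneg_left hr21 hD]
      have h4 : σq * (q - 1) / q * r ^ (p - 2) * r ^ 2 ≤ (D + L / 2) * r ^ 2 := by
        rw [hsplit] at key; nlinarith
      exact (mul_le_mul_iff_of_pos_right hr2).mp h4
    have key3 : r ^ (p - 2) ≤ (2 * D + L) * q / (2 * (q - 1) * σq) := by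
      have hAeq : (2 * D + L) * q / (2 * (q - 1) * σq) = (D + L / 2) / (σq * (q - 1) / q) := by
        field_simp
      rw [hAeq, le_div_iff₀ hc, mul_comm]
      exact key2
    have hpe : (p - 2) * ((q - 1) / (2 - q)) = 1 := by
      simp only [hpdef]
      field_simp
      ring
    have hrw : r = (r ^ (p - 2)) ^ ((q - 1) / (2 - q)) := by
      rw [← Real.rpow_mul hr0, hpe, Real.rpow_one]
    rw [hrw]
    exact Real.rpow_le_rpow (Real.rpow_nonneg hr0 _) key3 (by positivity)
end

section
/- Let (θ_k)_{k≥k₀} be a sequence of nonnegative reals satisfying θ_{k+1} ≤ θ_k − θ_k^{2/q} for all k ≥ k₀, where q ∈ (1,2). Then for all k > k₀: θ_k ≤ (ζ(k − k₀))^{−1/ζ}, where ζ = (2−q)/q > 0. -/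
open Real

lemma key_step (ζ x y : ℝ) (h0 : 0 < ζ) (h1 : ζ < 1) (hx : 0 < x) (hy : 0 < y)
    (hle : y ≤ x - x ^ (1 + ζ)) : x ^ (-ζ) + ζ ≤ y ^ (-ζ) := by
  set u : ℝ := x ^ ζ with hu
  have hu0 : 0 < u := Real.rpow_pos_of_pos hx ζ
  have hxsplit : x ^ (1 + ζ) = x * u := by
    rw [hu, Real.rpow_add hx, Real.rpow_one]
  have hu1 : u < 1 := by
    by_contra h
    push_neg at h
    have : x ≤ x * u := le_mul_of_one_le_right hx.le h
    rw [hxsplit] at hle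
    linarith
  have hy' : y ≤ x * (1 - u) := by rw [hxsplit] at hle; nlinarith
  have h1u : 0 < 1 - u := by linarith
  -- Bernoulli: (1 - u)^ζ ≤ 1 - ζ * u
  have hbern : (1 - u) ^ ζ ≤ 1 - ζ * u := by
    have h := rpow_one_add_le_one_add_mul_self (s := -u) (by linarith) h0.le h1.le
    have he : (1:ℝ) - u = 1 + -u := by ring
    rw [he]; linarith
  have hζu : 0 < 1 - ζ * u := by nlinarith
  have hbpos : 0 < (1 - u) ^ ζ := Real.rpow_pos_of_pos h1u ζ
  -- (1-u)^(-ζ) ≥ 1 + ζ u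
  have hinv : 1 + ζ * u ≤ (1 - u) ^ (-ζ) := by
    rw [Real.rpow_neg h1u.le]
    have hmul : (1 + ζ * u) * ((1 - u) ^ ζ) ≤ 1 := by
      have hb := mul_le_mul_of_nonneg_left hbern
        (show (0:ℝ) ≤ 1 + ζ * u by nlinarith)
      nlinarith [hb, sq_nonneg (ζ * u)]
    calc 1 + ζ * u = (1 + ζ * u) * ((1 - u) ^ ζ) * ((1 - u) ^ ζ)⁻¹ := by
          field_simp
      _ ≤ 1 * ((1 - u) ^ ζ)⁻¹ := mul_le_mul_of_nonneg_right hmul (by positivity)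
      _ = ((1 - u) ^ ζ)⁻¹ := one_mul _
  have hmono : (x * (1 - u)) ^ (-ζ) ≤ y ^ (-ζ) :=
    Real.rpow_le_rpow_of_nonpos hy hy' (by linarith)
  have hxu : x ^ (-ζ) * u = 1 := by
    rw [hu, ← Real.rpow_add hx]; simp
  calc x ^ (-ζ) + ζ = x ^ (-ζ) * (1 + ζ * u) := by
        have : x ^ (-ζ) * (ζ * u) = ζ := by
          rw [mul_comm ζ u, ← mul_assoc, hxu, one_mul]
        rw [mul_add, mul_one, this]
    _ ≤ x ^ (-ζ) * (1 - u) ^ (-ζ) := by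
        have : 0 < x ^ (-ζ) := Real.rpow_pos_of_pos hx _
        nlinarith
    _ = (x * (1 - u)) ^ (-ζ) := (Real.mul_rpow hx.le h1u.le).symm
    _ ≤ y ^ (-ζ) := hmono

/-- Recurrence `θ_{k+1} ≤ θ_k - θ_k^{2/q}` with `q ∈ (1,2)` yields the sublinear
rate `θ_k ≤ (ζ (k - k₀))^{-1/ζ}` with `ζ = (2-q)/q`. -/
theorem stmt10 (θ : ℕ → ℝ) (k₀ : ℕ) (q : ℝ) (hq : q ∈ Set.Ioo (1:ℝ) 2)
    (hnonneg : ∀ k, 0 ≤ θ k)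
    (hrec : ∀ k, k₀ ≤ k → θ (k + 1) ≤ θ k - θ k ^ (2 / q)) :
    ∀ k, k₀ < k →
      θ k ≤ ((2 - q) / q * ((k : ℝ) - (k₀ : ℝ))) ^ (-(1 / ((2 - q) / q))) := by
  obtain ⟨hq1, hq2⟩ := hq
  have hqpos : (0:ℝ) < q := by linarith
  set ζ : ℝ := (2 - q) / q with hζ
  have hζ0 : 0 < ζ := div_pos (by linarith) hqpos
  have hζ1 : ζ < 1 := by rw [hζ, div_lt_one hqpos]; linarith
  have hexp : 2 / q = 1 + ζ := by rw [hζ]; field_simp; ring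
  have hrec' : ∀ k, k₀ ≤ k → θ (k + 1) ≤ θ k - θ k ^ (1 + ζ) := by
    intro k hk; rw [← hexp]; exact hrec k hk
  -- θ is ≤ 1 from k₀ on, and the key inductive estimate
  have hθ1 : ∀ k, k₀ ≤ k → θ k ≤ 1 := by
    intro k hk
    by_contra h
    push_neg at h
    have h1 : θ k < θ k ^ (1 + ζ) := by
      calc θ k = θ k ^ (1:ℝ) := (Real.rpow_one _).symm
        _ < θ k ^ (1 + ζ) := Real.rpow_lt_rpow_of_exponent_lt h (by linarith)
    have := hrec' k hk
    have := hnonneg (k + 1)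
    linarith
  have main : ∀ k, k₀ < k → 0 < θ k → ζ * ((k : ℝ) - (k₀ : ℝ)) ≤ θ k ^ (-ζ) := by
    intro k hk
    induction k with
    | zero => omega
    | succ n ih =>
      intro hpos
      rcases Nat.lt_or_ge k₀ n with hn | hn
      · -- inductive step
        have hθn : 0 < θ n := by
          rcases (hnonneg n).lt_or_eq with h | h
          · exact h
          · exfalso
            have := hrec' n hn.le
            rw [← h] at this
            rw [Real.zero_rpow (by linarith : (0:ℝ) < 1 + ζ).ne'] at this
            simp at this
            linarith
        have hIH := ih hn hθn
        have hks := key_step ζ (θ n) (θ (n+1)) hζ0 hζ1 hθn hpos (hrec' n hn.le)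
        push_cast
        have : ((n:ℝ) + 1 - k₀) = ((n:ℝ) - k₀) + 1 := by ring
        rw [this, mul_add, mul_one]
        linarith
      · -- base case: n = k₀
        have hn' : n = k₀ := by omega
        subst hn'
        have h1 : θ (n + 1) ≤ 1 := hθ1 (n+1) (by omega)
        have h2 : (1:ℝ) ≤ θ (n+1) ^ (-ζ) := by
          calc (1:ℝ) = (1:ℝ) ^ (-ζ) := (Real.one_rpow _).symm
            _ ≤ θ (n+1) ^ (-ζ) := Real.rpow_le_rpow_of_nonpos hpos h1 (by linarith)
        push_cast
        nlinarith
  intro k hk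
  have hkpos : (0:ℝ) < (k:ℝ) - (k₀:ℝ) := by
    have : (k₀:ℝ) < k := by exact_mod_cast hk
    linarith
  have hrhs : 0 < ζ * ((k:ℝ) - (k₀:ℝ)) := mul_pos hζ0 hkpos
  rcases (hnonneg k).lt_or_eq with hpos | hzero
  · have h := main k hk hpos
    have hmono : (θ k ^ (-ζ)) ^ (-(1/ζ)) ≤ (ζ * ((k:ℝ) - (k₀:ℝ))) ^ (-(1/ζ)) :=
      Real.rpow_le_rpow_of_nonpos hrhs h (neg_nonpos.mpr (one_div_nonneg.mpr hζ0.le))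
    have heq : (θ k ^ (-ζ)) ^ (-(1/ζ)) = θ k := by
      rw [← Real.rpow_mul (hnonneg k),
        show (-ζ) * (-(1/ζ)) = 1 by field_simp, Real.rpow_one]
    rw [heq] at hmono
    exact hmono
  · rw [← hzero]
    exact (Real.rpow_pos_of_pos hrhs _).le
end
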